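/- Let f : ℝ → ℝ with f(0) = 0, let K > 0, ε > 0 and ε' ∈ (0,1), and suppose that for all h₁, h₂ ∈ (0, ε) one has |h₁·f(h₂) + h₂·f(−h₁)| ≤ K·h₁·h₂·(h₁+h₂)^{1−ε'}. Then f is differentiable at 0, and moreover |f(h) − f'(0)·h| ≤ K·|h|^{2−ε'} for all h with 0 < |h| < ε. -/

import Mathlib

/-- Quantitative differentiability criterion: condition (2.15) implies differentiability
at `0` together with the quantitative bound `|f h - f'(0) h| ≤ K |h|^(2-ε')`. -/
theorem quantitative_diff_criterion
    (f : ℝ → ℝ) (hf0 : f 0 = 0) (K ε ε' : ℝ)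
    (hK : 0 < K) (hε : 0 < ε) (hε' : ε' ∈ Set.Ioo (0:ℝ) 1)
    (hyp : ∀ h₁ h₂ : ℝ, h₁ ∈ Set.Ioo 0 ε → h₂ ∈ Set.Ioo 0 ε →
      |h₁ * f h₂ + h₂ * f (-h₁)| ≤ K * h₁ * h₂ * (h₁ + h₂) ^ (1 - ε')) :
    ∃ d : ℝ, HasDerivAt f d 0 ∧
      ∀ h : ℝ, 0 < |h| → |h| < ε → |f h - d * h| ≤ K * |h| ^ (2 - ε') := by
  set c : ℝ := 1 - ε' with hc_def
  have hc : 0 < c := by simp [hc_def]; linarith [hε'.2]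
  -- slope function
  set S : ℝ → ℝ := fun x => f x / x with hS_def
  -- key inequality between right slope and left slope
  have key : ∀ x t : ℝ, x ∈ Set.Ioo 0 ε → t ∈ Set.Ioo 0 ε →
      |S x - S (-t)| ≤ K * (x + t) ^ c := by
    intro x t hx ht
    have H := hyp t x ht hx
    have hx0 : (0:ℝ) < x := hx.1
    have ht0 : (0:ℝ) < t := ht.1
    have hxne : x ≠ 0 := hx0.ne'
    have htne : t ≠ 0 := ht0.ne'
    have hSneg : S (-t) = -(f (-t) / t) := by
      simp only [hS_def, div_neg_eq_neg_div]
    have heq : S x - S (-t) = (t * f x + x * f (-t)) / (t * x) := by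
      rw [hSneg]
      simp only [hS_def, sub_neg_eq_add]
      field_simp
    rw [heq, abs_div, abs_of_pos (mul_pos ht0 hx0), div_le_iff₀ (mul_pos ht0 hx0)]
    calc |t * f x + x * f (-t)| ≤ K * t * x * (t + x) ^ c := H
      _ = K * (x + t) ^ c * (t * x) := by rw [add_comm t x]; ring
  -- the sequence of scales
  set u : ℕ → ℝ := fun n => ε / (n + 2) with hu_def
  have hu_pos : ∀ n, 0 < u n := fun n => by
    apply div_pos hε; positivity
  have hu_lt : ∀ n, u n < ε := by
    intro n
    have : (1:ℝ) < (n:ℝ) + 2 := by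
      have := Nat.cast_nonneg (α := ℝ) n; linarith
    calc u n = ε / ((n:ℝ) + 2) := rfl
      _ < ε / 1 := by apply div_lt_div_of_pos_left hε (by norm_num) this
      _ = ε := div_one ε
  have hu_mem : ∀ n, u n ∈ Set.Ioo 0 ε := fun n => ⟨hu_pos n, hu_lt n⟩
  have hu_anti : ∀ {n m : ℕ}, n ≤ m → u m ≤ u n := by
    intro n m hnm
    apply div_le_div_of_nonneg_left hε.le (by positivity)
    have : (n:ℝ) ≤ (m:ℝ) := Nat.cast_le.mpr hnm
    linarith
  have hu_tendsto : Filter.Tendsto u Filter.atTop (nhds 0) := by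
    apply Filter.Tendsto.div_atTop (tendsto_const_nhds)
    exact Filter.tendsto_atTop_add_const_right _ 2 tendsto_natCast_atTop_atTop
  -- rpow continuity at 0
  have hφ0 : Filter.Tendsto (fun y : ℝ => y ^ c) (nhds 0) (nhds 0) := by
    have := (Real.continuousAt_rpow_const 0 c (Or.inr hc.le)).tendsto
    rwa [Real.zero_rpow hc.ne'] at this
  -- the two sequences of slopes
  set p : ℕ → ℝ := fun n => S (u n) with hp_def
  set q : ℕ → ℝ := fun n => S (-(u n)) with hq_def
  have hpq : ∀ n m, |p n - q m| ≤ K * (u n + u m) ^ c := fun n m =>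
    key (u n) (u m) (hu_mem n) (hu_mem m)
  -- p is Cauchy
  have hp_cauchy : CauchySeq p := by
    apply cauchySeq_of_le_tendsto_0 (fun N => 2 * K * (2 * u N) ^ c)
    · intro n m N hn hm
      rw [Real.dist_eq]
      have h1 : |p n - q N| ≤ K * (u n + u N) ^ c := hpq n N
      have h2 : |p m - q N| ≤ K * (u m + u N) ^ c := hpq m N
      have hb1 : K * (u n + u N) ^ c ≤ K * (2 * u N) ^ c := by
        apply mul_le_mul_of_nonneg_left _ hK.le
        apply Real.rpow_le_rpow (by positivity) _ hc.le
        have := hu_anti hn; linarith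
      have hb2 : K * (u m + u N) ^ c ≤ K * (2 * u N) ^ c := by
        apply mul_le_mul_of_nonneg_left _ hK.le
        apply Real.rpow_le_rpow (by positivity) _ hc.le
        have := hu_anti hm; linarith
      calc |p n - p m| ≤ |p n - q N| + |p m - q N| := by
            rw [abs_sub_comm (p m) (q N)]; exact abs_sub_le _ _ _
        _ ≤ K * (2 * u N) ^ c + K * (2 * u N) ^ c := by
            linarith
        _ = 2 * K * (2 * u N) ^ c := by ring
    · have h2u : Filter.Tendsto (fun N => 2 * u N) Filter.atTop (nhds 0) := by
        have := hu_tendsto.const_mul (2:ℝ); simpa using this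
      have := (hφ0.comp h2u).const_mul (2 * K)
      simpa using this
  obtain ⟨d, hd⟩ := cauchySeq_tendsto_of_complete hp_cauchy
  -- q tends to d as well; first, bound |q m - d|
  have hqd_bound : ∀ m, |q m - d| ≤ K * (u m) ^ c := by
    intro m
    have hL : Filter.Tendsto (fun n => |p n - q m|) Filter.atTop (nhds |d - q m|) :=
      ((hd.sub tendsto_const_nhds).abs)
    have hR : Filter.Tendsto (fun n => K * (u n + u m) ^ c) Filter.atTop
        (nhds (K * (u m) ^ c)) := by
      have h1 : Filter.Tendsto (fun n => u n + u m) Filter.atTop (nhds (u m)) := by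
        have := hu_tendsto.add_const (u m); simpa using this
      have hcont : ContinuousAt (fun y : ℝ => y ^ c) (u m) :=
        Real.continuousAt_rpow_const _ _ (Or.inl (hu_pos m).ne')
      exact (hcont.tendsto.comp h1).const_mul K
    have := le_of_tendsto_of_tendsto' hL hR (fun n => hpq n m)
    rwa [abs_sub_comm] at this
  have hq_tendsto : Filter.Tendsto q Filter.atTop (nhds d) := by
    rw [tendsto_iff_dist_tendsto_zero]
    apply squeeze_zero (g := fun n => K * u n ^ c) (fun n => dist_nonneg) (fun n => by
      rw [Real.dist_eq]; exact hqd_bound n)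
    have := (hφ0.comp hu_tendsto).const_mul K
    simpa using this
  -- main slope bound
  have slope_bound : ∀ h : ℝ, 0 < |h| → |h| < ε → |S h - d| ≤ K * |h| ^ c := by
    intro h h0 hhε
    rcases lt_or_gt_of_ne (abs_pos.mp h0) with hneg | hpos
    · -- h < 0 : h = -t with t = -h ∈ (0, ε)
      have ht : -h ∈ Set.Ioo 0 ε := ⟨by linarith, by rwa [abs_of_neg hneg] at hhε⟩
      have hL : Filter.Tendsto (fun n => |p n - S h|) Filter.atTop (nhds |d - S h|) :=
        ((hd.sub tendsto_const_nhds).abs)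
      have hR : Filter.Tendsto (fun n => K * (u n + -h) ^ c) Filter.atTop
          (nhds (K * (-h) ^ c)) := by
        have h1 : Filter.Tendsto (fun n => u n + -h) Filter.atTop (nhds (-h)) := by
          have := hu_tendsto.add_const (-h); simpa using this
        have hcont : ContinuousAt (fun y : ℝ => y ^ c) (-h) :=
          Real.continuousAt_rpow_const _ _ (Or.inl (by linarith : -h ≠ 0))
        exact (hcont.tendsto.comp h1).const_mul K
      have hle : ∀ n, |p n - S h| ≤ K * (u n + -h) ^ c := by
        intro n
        have := key (u n) (-h) (hu_mem n) ht
        simpa using this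
      have := le_of_tendsto_of_tendsto' hL hR hle
      rw [abs_sub_comm] at this
      rwa [abs_of_neg hneg]
    · -- h > 0
      have hh : h ∈ Set.Ioo 0 ε := ⟨hpos, by rwa [abs_of_pos hpos] at hhε⟩
      have hL : Filter.Tendsto (fun m => |S h - q m|) Filter.atTop (nhds |S h - d|) :=
        ((tendsto_const_nhds.sub hq_tendsto).abs)
      have hR : Filter.Tendsto (fun m => K * (h + u m) ^ c) Filter.atTop
          (nhds (K * h ^ c)) := by
        have h1 : Filter.Tendsto (fun m => h + u m) Filter.atTop (nhds h) := by
          have := hu_tendsto.const_add h; simpa using this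
        have hcont : ContinuousAt (fun y : ℝ => y ^ c) h :=
          Real.continuousAt_rpow_const _ _ (Or.inl hpos.ne')
        exact (hcont.tendsto.comp h1).const_mul K
      have hle : ∀ m, |S h - q m| ≤ K * (h + u m) ^ c := fun m =>
        key h (u m) hh (hu_mem m)
      have := le_of_tendsto_of_tendsto' hL hR hle
      rwa [abs_of_pos hpos]
  refine ⟨d, ?_, ?_⟩
  · -- differentiability via slope
    rw [hasDerivAt_iff_tendsto_slope]
    rw [tendsto_iff_dist_tendsto_zero]
    have hev : ∀ᶠ x in nhdsWithin (0:ℝ) {(0:ℝ)}ᶜ,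
        dist (slope f 0 x) d ≤ K * |x| ^ c := by
      filter_upwards [self_mem_nhdsWithin,
        eventually_nhdsWithin_of_eventually_nhds
          (eventually_abs_sub_lt (0:ℝ) hε)] with x hx hxε
      have hx0 : x ≠ 0 := hx
      have : slope f 0 x = S x := by
        simp [slope_def_field, hS_def, hf0, div_eq_div_iff]
      rw [Real.dist_eq, this]
      apply slope_bound x (abs_pos.mpr hx0)
      simpa using hxε
    have hmaj : Filter.Tendsto (fun x : ℝ => K * |x| ^ c)
        (nhdsWithin (0:ℝ) {(0:ℝ)}ᶜ) (nhds 0) := by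
      have habs : Filter.Tendsto (fun x : ℝ => |x|) (nhdsWithin (0:ℝ) {(0:ℝ)}ᶜ)
          (nhds 0) := by
        have := continuous_abs.tendsto (0:ℝ)
        simpa using this.mono_left nhdsWithin_le_nhds
      have := (hφ0.comp habs).const_mul K
      simpa using this
    exact squeeze_zero' (Filter.Eventually.of_forall fun _ => dist_nonneg) hev hmaj
  · intro h h0 hhε
    have hd' := slope_bound h h0 hhε
    have hne : h ≠ 0 := abs_pos.mp h0
    have heq : f h - d * h = h * (S h - d) := by
      have : h ≠ 0 := hne
      simp only [hS_def]; field_simp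
    rw [heq, abs_mul]
    have : |h| * |S h - d| ≤ |h| * (K * |h| ^ c) :=
      mul_le_mul_of_nonneg_left hd' (abs_nonneg h)
    refine this.trans (le_of_eq ?_)
    rw [show (2:ℝ) - ε' = 1 + c by simp [hc_def]; ring,
      Real.rpow_add (abs_pos.mpr hne), Real.rpow_one]
    ring
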